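/- Let M be a finite matroid with a loop 0, and let T be a nilpotent strong map on M (T(cl(S)) ⊆ cl(T S) for all S, and T^n maps into cl(0) for some n). If T has a Jordan basis (a basis of M expressible as a disjoint union of T-orbits {e, Te, ..., T^m e} of nonzero elements), then for every m ≥ 0, rk(Ker(T^m)) + rk(Im(T^m)) = rk(M), where Ker(T^m) = {e : T^m(e) ∈ cl(0)} and Im(T^m) = T^m(E). -/

import Mathlib

/-- The rank of a set in a matroid: the maximal cardinality of an independent subset. -/
noncomputable def matroidRk {α : Type*} (M : Matroid α) (S : Set α) : ℕ :=
  sSup {n : ℕ | ∃ I ⊆ S, M.Indep I ∧ I.ncard = n}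

/-- The orbit of `e` under `T` : the nonzero (non-loop) iterates of `e`. -/
def orbOf {α : Type*} (M : Matroid α) (zero : α) (T : α → α) (e : α) : Set α :=
  {v | ∃ m : ℕ, v = T^[m] e ∧ v ∉ M.closure {zero}}

open Set

section Aux

variable {α : Type*} {M : Matroid α}

lemma aux_encard_le {I J : Set α} (hI : M.Indep I) (hJ : M.Indep J)
    (h : I ⊆ M.closure J) : I.encard ≤ J.encard := by
  obtain ⟨I₂, hI₂, hII₂⟩ := hI.subset_isBasis_of_subset h (M.closure_subset_ground J)
  exact (encard_mono hII₂).trans (hI₂.encard_eq_encard hJ.isBasis_closure).le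

lemma aux_ncard_le [M.Finite] {I J : Set α} (hI : M.Indep I) (hJ : M.Indep J)
    (h : I ⊆ M.closure J) : I.ncard ≤ J.ncard := by
  have hJf : J.Finite := M.set_finite J hJ.subset_ground
  have := aux_encard_le hI hJ h
  rw [Set.ncard_def, Set.ncard_def]
  exact ENat.toNat_le_toNat this (by simpa using hJf)

lemma aux_matroidRk_eq [M.Finite] {A I : Set α} (hI : M.Indep I) (hIA : I ⊆ A)
    (hA : A ⊆ M.closure I) : matroidRk M A = I.ncard := by
  have hbdd : ∀ n ∈ {n : ℕ | ∃ I' ⊆ A, M.Indep I' ∧ I'.ncard = n}, n ≤ I.ncard := by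
    rintro n ⟨I', hI'A, hI', rfl⟩
    exact aux_ncard_le hI' hI (hI'A.trans hA)
  apply le_antisymm
  · exact csSup_le ⟨0, ∅, empty_subset _, M.empty_indep, by simp⟩ hbdd
  · exact le_csSup ⟨I.ncard, hbdd⟩ ⟨I, hIA, hI, rfl⟩

lemma aux_indep_union {I X W : Set α} (hI : M.Indep I) (hX : X.Finite)
    (hXE : X ⊆ M.E) (hIW : I ⊆ W) (hWE : W ⊆ M.E)
    (h : ∀ x ∈ X, x ∉ M.closure (W ∪ (X \ {x}))) : M.Indep (I ∪ X) := by
  refine Set.Finite.induction_on_subset (motive := fun s _ => s ⊆ X → M.Indep (I ∪ s)) X hX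
    (fun _ => by simpa using hI) ?_ Set.Subset.rfl
  intro a s haX hsX has ih _
  have hIs : M.Indep (I ∪ s) := ih hsX
  have haI : a ∉ I := by
    intro haI
    exact h a haX (M.subset_closure_of_subset' subset_union_left hWE (hIW haI))
  have haIs : a ∉ I ∪ s := by simp [haI, has]
  rw [union_insert]
  rw [hIs.insert_indep_iff_of_notMem haIs]
  refine ⟨hXE haX, fun hacl => h a haX ?_⟩
  refine M.closure_subset_closure ?_ hacl
  refine union_subset (hIW.trans subset_union_left) ?_
  exact fun x hx => Or.inr ⟨hsX hx, fun hxa => has ((Set.eq_of_mem_singleton hxa) ▸ hx)⟩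

end Aux

theorem stmt18 {α : Type*} (M : Matroid α) [M.Finite]
    (zero : α) (hzero : zero ∈ M.closure ∅)
    (T : α → α) (hTE : ∀ e ∈ M.E, T e ∈ M.E)
    (hstrong : ∀ S ⊆ M.E, T '' M.closure S ⊆ M.closure (T '' S))
    (hnil : ∃ n : ℕ, ∀ e ∈ M.E, T^[n] e ∈ M.closure {zero})
    (hJordan : ∃ (B : Set α) (S : Set α), M.IsBase B ∧
      B = ⋃ e ∈ S, orbOf M zero T e ∧
      (∀ e ∈ S, ∀ e' ∈ S, e ≠ e' →
        Disjoint (orbOf M zero T e) (orbOf M zero T e'))) :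
    ∀ m : ℕ,
      matroidRk M {e ∈ M.E | T^[m] e ∈ M.closure {zero}} +
        matroidRk M (T^[m] '' M.E) = matroidRk M M.E := by
  intro m
  obtain ⟨n, hn⟩ := hnil
  obtain ⟨B, S, hB, hBU, hdisj⟩ := hJordan
  have hcl0 : M.closure {zero} = M.closure ∅ := by
    apply subset_antisymm
    · have h1 : ({zero} : Set α) ⊆ M.closure ∅ := by simpa using hzero
      simpa using M.closure_subset_closure_of_subset_closure h1
    · exact M.closure_subset_closure (empty_subset _)
  set L := M.closure ∅ with hLdef
  have hLE : L ⊆ M.E := M.closure_subset_ground ∅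
  -- iterates of T preserve the ground set
  have hTmE : ∀ k, ∀ e ∈ M.E, T^[k] e ∈ M.E := by
    intro k
    induction k with
    | zero => simp
    | succ k ih =>
      intro e he
      rw [Function.iterate_succ_apply']
      exact hTE _ (ih e he)
  -- loops stay loops
  have hTL : ∀ x ∈ L, T x ∈ L := by
    intro x hx
    have h1 := hstrong ∅ (empty_subset _)
    simpa using h1 ⟨x, hx, rfl⟩
  have hTkL : ∀ k, ∀ x ∈ L, T^[k] x ∈ L := by
    intro k
    induction k with
    | zero => simp
    | succ k ih =>
      intro x hx
      rw [Function.iterate_succ_apply']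
      exact hTL _ (ih x hx)
  -- iterates are strong maps
  have hstrongk : ∀ k, ∀ A ⊆ M.E, T^[k] '' M.closure A ⊆ M.closure (T^[k] '' A) := by
    intro k
    induction k with
    | zero => simp
    | succ k ih =>
      intro A hA
      have h1 : T^[k] '' A ⊆ M.E := by
        rintro _ ⟨a, ha, rfl⟩; exact hTmE k a (hA ha)
      rw [Function.iterate_succ', image_comp, image_comp]
      calc T '' (T^[k] '' M.closure A) ⊆ T '' M.closure (T^[k] '' A) :=
            image_mono (ih A hA)
        _ ⊆ M.closure (T '' (T^[k] '' A)) := hstrong _ h1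
  -- nilpotency for all large iterates
  have hnilk : ∀ e ∈ M.E, ∀ k, n ≤ k → T^[k] e ∈ L := by
    intro e he k hk
    obtain ⟨d, rfl⟩ := Nat.exists_eq_add_of_le hk
    rw [Nat.add_comm, Function.iterate_add_apply]
    exact hTkL d _ (by rw [← hcl0] at hLdef ⊢; exact hn e he)
  have hBE : B ⊆ M.E := hB.subset_ground
  have hBfin : B.Finite := M.set_finite B hBE
  -- membership in B via orbits
  have hmemB : ∀ b, b ∈ B ↔ ∃ e ∈ S, ∃ k : ℕ, b = T^[k] e ∧ b ∉ L := by
    intro b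
    rw [hBU]
    simp only [mem_iUnion, orbOf, mem_setOf_eq, hcl0, exists_prop]
  -- the kernel
  set Ker : Set α := {e ∈ M.E | T^[m] e ∈ M.closure {zero}} with hKerdef
  have hKerE : Ker ⊆ M.E := sep_subset _ _
  have hKer_iff : ∀ x ∈ M.E, (x ∈ Ker ↔ T^[m] x ∈ L) := by
    intro x hx
    simp only [hKerdef, mem_setOf_eq, hcl0, hx, true_and, hLdef]
  set K : Set α := B ∩ Ker with hKdef
  set X : Set α := B \ Ker with hXdef
  have hXE : X ⊆ M.E := (diff_subset).trans hBE
  have hXB : X ⊆ B := diff_subset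
  have hXnL : ∀ x ∈ X, T^[m] x ∉ L := by
    intro x hx
    have := hx.2
    rwa [hKer_iff x (hBE hx.1)] at this
  -- B is stable under T^[m] on non-loop outputs
  have hTmB : ∀ b ∈ B, T^[m] b ∉ L → T^[m] b ∈ B := by
    intro b hb hnl
    obtain ⟨e, heS, k, hbk, _⟩ := (hmemB b).1 hb
    refine (hmemB _).2 ⟨e, heS, m + k, ?_, hnl⟩
    rw [hbk, ← Function.iterate_add_apply]
  set J : Set α := T^[m] '' X with hJdef
  have hJB : J ⊆ B := by
    rintro _ ⟨x, hx, rfl⟩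
    exact hTmB x (hXB hx) (hXnL x hx)
  have hJindep : M.Indep J := hB.indep.subset hJB
  -- injectivity of T^[m] on X
  have hinj : Set.InjOn T^[m] X := by
    have key : ∀ e, ∀ k₁ k₂ : ℕ, k₁ < k₂ → T^[m + k₁] e = T^[m + k₂] e →
        T^[m + k₁] e ∈ M.E → T^[m + k₁] e ∉ L → False := by
      intro e k₁ k₂ hlt heq hyE hyL
      obtain ⟨d, hd⟩ : ∃ d, k₂ = k₁ + d + 1 := ⟨k₂ - k₁ - 1, by omega⟩
      have h1 : T^[d + 1] (T^[m + k₁] e) = T^[m + k₁] e := by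
        rw [← Function.iterate_add_apply, show d + 1 + (m + k₁) = m + k₂ by omega]
        exact heq.symm
      have h2 : ∀ t : ℕ, T^[t * (d + 1)] (T^[m + k₁] e) = T^[m + k₁] e := by
        intro t
        induction t with
        | zero => simp
        | succ t ih => rw [Nat.succ_mul, Function.iterate_add_apply, h1, ih]
      apply hyL
      rw [← h2 n]
      exact hnilk _ hyE _ (Nat.le_mul_of_pos_right n (Nat.succ_pos d))
    intro a ha b hb hab
    by_contra hne
    obtain ⟨e₁, he₁S, k₁, hak, -⟩ := (hmemB a).1 (hXB ha)
    obtain ⟨e₂, he₂S, k₂, hbk, -⟩ := (hmemB b).1 (hXB hb)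
    have hya : T^[m] a = T^[m + k₁] e₁ := by rw [hak, ← Function.iterate_add_apply]
    have hyb : T^[m] b = T^[m + k₂] e₂ := by rw [hbk, ← Function.iterate_add_apply]
    have hyE : T^[m] a ∈ M.E := hTmE m a (hBE (hXB ha))
    have hyL : T^[m] a ∉ L := hXnL a ha
    by_cases hee : e₁ = e₂
    · subst hee
      rcases lt_trichotomy k₁ k₂ with h | h | h
      · exact key e₁ k₁ k₂ h (by rw [← hya, hab, hyb]) (by rwa [← hya]) (by rwa [← hya])
      · exact hne (by rw [hak, hbk, h])
      · refine key e₁ k₂ k₁ h (by rw [← hyb, ← hab, hya]) ?_ ?_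
        · rw [← hyb]; exact hTmE m b (hBE (hXB hb))
        · rw [← hyb]; exact hXnL b hb
    · have hmem₁ : T^[m] a ∈ orbOf M zero T e₁ :=
        ⟨m + k₁, hya, by rwa [hcl0]⟩
      have hmem₂ : T^[m] a ∈ orbOf M zero T e₂ :=
        ⟨m + k₂, by rw [hab, hyb], by rwa [hcl0]⟩
      exact (hdisj e₁ he₁S e₂ he₂S hee).ne_of_mem hmem₁ hmem₂ rfl
  -- the image of T^[m] is spanned by J
  have hJim : J ⊆ T^[m] '' M.E := image_mono hXE
  have hImcl : T^[m] '' M.E ⊆ M.closure J := by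
    have h1 : T^[m] '' M.E ⊆ M.closure (T^[m] '' B) := by
      rw [← hB.closure_eq]
      exact hstrongk m B hBE
    have h2 : T^[m] '' B ⊆ M.closure J := by
      rintro _ ⟨b, hb, rfl⟩
      by_cases hbl : T^[m] b ∈ L
      · exact M.closure_subset_closure (empty_subset J) hbl
      · have hbX : b ∈ X := ⟨hb, fun hbK => hbl ((hKer_iff b (hBE hb)).1 hbK)⟩
        exact M.subset_closure J (hJB.trans hBE) ⟨b, hbX, rfl⟩
    exact h1.trans (M.closure_subset_closure_of_subset_closure h2)
  have hrkIm : matroidRk M (T^[m] '' M.E) = J.ncard :=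
    aux_matroidRk_eq hJindep hJim hImcl
  -- the kernel side: a basis of Ker containing K
  obtain ⟨I, hIbasis, hKI⟩ :=
    (hB.indep.subset (inter_subset_left : K ⊆ B)).subset_isBasis_of_subset
      (inter_subset_right : K ⊆ Ker) hKerE
  have hrkKer : matroidRk M Ker = I.ncard :=
    aux_matroidRk_eq hIbasis.indep hIbasis.subset hIbasis.subset_closure
  -- key claim : elements of X are not spanned by Ker together with the rest of X
  have hclaim : ∀ x ∈ X, x ∉ M.closure (Ker ∪ (X \ {x})) := by
    intro x hx hmem
    have hsubE : Ker ∪ (X \ {x}) ⊆ M.E := union_subset hKerE (diff_subset.trans hXE)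
    have h1 : T^[m] x ∈ M.closure (T^[m] '' (Ker ∪ (X \ {x}))) :=
      hstrongk m _ hsubE ⟨x, hmem, rfl⟩
    have h2 : T^[m] '' (Ker ∪ (X \ {x})) ⊆ M.closure (J \ {T^[m] x}) := by
      rintro _ ⟨a, ha, rfl⟩
      rcases ha with haK | haX
      · have : T^[m] a ∈ L := (hKer_iff a (hKerE haK)).1 haK
        exact M.closure_subset_closure (empty_subset _) this
      · refine M.subset_closure _ ((diff_subset.trans (hJB.trans hBE))) ?_
        refine ⟨⟨a, haX.1, rfl⟩, ?_⟩
        simp only [mem_singleton_iff]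
        intro heq
        exact haX.2 (hinj haX.1 hx heq)
    have h3 : T^[m] x ∈ M.closure (J \ {T^[m] x}) :=
      M.closure_subset_closure_of_subset_closure h2 h1
    exact hJindep.notMem_closure_diff_of_mem ⟨x, hx, rfl⟩ h3
  -- I ∪ X is independent
  have hIX : M.Indep (I ∪ X) :=
    aux_indep_union hIbasis.indep (hBfin.subset hXB) hXE hIbasis.subset hKerE hclaim
  -- cardinality bookkeeping
  have hIfin : I.Finite := M.set_finite I hIbasis.indep.subset_ground
  have hXfin : X.Finite := hBfin.subset hXB
  have hdisjIX : Disjoint I X := by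
    refine disjoint_left.2 fun a haI haX => ?_
    exact haX.2 (hIbasis.subset haI)
  have hdisjKX : Disjoint K X := disjoint_of_subset_left inter_subset_right disjoint_sdiff_right
  have hBKX : K ∪ X = B := inter_union_diff B Ker
  have hIXcard : (I ∪ X).ncard ≤ B.ncard := by
    have h1 : I ∪ X ⊆ M.closure B := by
      rw [hB.closure_eq]
      exact hIX.subset_ground
    exact aux_ncard_le hIX hB.indep h1
  rw [ncard_union_eq hdisjIX hIfin hXfin] at hIXcard
  have hBcard : B.ncard = K.ncard + X.ncard := by
    rw [← hBKX, ncard_union_eq hdisjKX (hBfin.subset inter_subset_left) hXfin]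
  have hIle : I.ncard ≤ K.ncard := by omega
  have hKle : K.ncard ≤ I.ncard := ncard_le_ncard hKI hIfin
  have hIK : I.ncard = K.ncard := le_antisymm hIle hKle
  have hJX : J.ncard = X.ncard := ncard_image_of_injOn hinj
  have hrkE : matroidRk M M.E = B.ncard := by
    refine aux_matroidRk_eq hB.indep hBE ?_
    rw [hB.closure_eq]
  rw [hrkKer, hrkIm, hrkE, hIK, hJX, hBcard]
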